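/- Let B be a commutative ring and let φ, γ : B → B be ring homomorphisms with φ∘γ = γ∘φ. Let P, Q ∈ GL_n(B) satisfy P·φ(Q) = Q·γ(P), where φ and γ are applied to matrices and vectors entrywise. For column vectors x, y ∈ B^n, let X_x and Y_y be the (n+1)×(n+1) block upper-triangular matrices with blocks [[P, x],[0, 1]] and [[Q, y],[0, 1]] respectively. Let E be the set of pairs (x, y) ∈ B^n × B^n with X_x·φ(Y_y) = Y_y·γ(X_x), and say (x, y) ∼ (x + P·φ(v) − v, y + Q·γ(v) − v) for v ∈ B^n (this is an equivalence relation on B^n × B^n). Then: (i) (x, y) ∈ E if and only if (P^{-1}·x, Q^{-1}·y) ∈ ker(d¹); and (ii) the assignment (x, y) ↦ (P^{-1}·x, Q^{-1}·y) induces a bijection from E/∼ onto the first cohomology ker(d¹)/im(d⁰) of the framed Herr complex. -/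

import Mathlib

noncomputable section

/-- Apply a ring endomorphism coordinatewise to a vector. -/
def mapVec {B : Type*} [CommRing B] {n : ℕ} (φ : B →+* B) (x : Fin n → B) : Fin n → B :=
  fun i => φ (x i)

/-- The degree-0 differential of the framed Herr complex:
`d⁰(z) = (φ(z) − P⁻¹·z, γ(z) − Q⁻¹·z)`. -/
def herrD0 {B : Type*} [CommRing B] {n : ℕ} (φ γ : B →+* B)
    (P Q : Matrix (Fin n) (Fin n) B) (z : Fin n → B) : (Fin n → B) × (Fin n → B) :=
  (mapVec φ z - P⁻¹.mulVec z, mapVec γ z - Q⁻¹.mulVec z)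

/-- The degree-1 differential of the framed Herr complex:
`d¹(x, y) = (γ(x) − φ(Q)⁻¹·x) + (γ(P)⁻¹·y − φ(y))`. -/
def herrD1 {B : Type*} [CommRing B] {n : ℕ} (φ γ : B →+* B)
    (P Q : Matrix (Fin n) (Fin n) B) (w : (Fin n → B) × (Fin n → B)) : Fin n → B :=
  (mapVec γ w.1 - (Q.map ⇑φ)⁻¹.mulVec w.1) + ((P.map ⇑γ)⁻¹.mulVec w.2 - mapVec φ w.2)

/-- The `(n+1)×(n+1)` block upper-triangular matrix `[[P, x], [0, 1]]`. -/
def blockExt {B : Type*} [CommRing B] {n : ℕ} (P : Matrix (Fin n) (Fin n) B)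
    (x : Fin n → B) : Matrix (Fin n ⊕ Fin 1) (Fin n ⊕ Fin 1) B :=
  Matrix.fromBlocks P (Matrix.of fun i (_ : Fin 1) => x i) 0 1

/-- The set `E` of pairs `(x, y)` such that `X_x·φ(Y_y) = Y_y·γ(X_x)`. -/
def herrExt {B : Type*} [CommRing B] {n : ℕ} (φ γ : B →+* B)
    (P Q : Matrix (Fin n) (Fin n) B) (w : (Fin n → B) × (Fin n → B)) : Prop :=
  blockExt P w.1 * (blockExt Q w.2).map ⇑φ = blockExt Q w.2 * (blockExt P w.1).map ⇑γ

/-- The equivalence relation `(x, y) ∼ (x + P·φ(v) − v, y + Q·γ(v) − v)`. -/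
def herrRel {B : Type*} [CommRing B] {n : ℕ} (φ γ : B →+* B)
    (P Q : Matrix (Fin n) (Fin n) B)
    (w w' : (Fin n → B) × (Fin n → B)) : Prop :=
  ∃ v : Fin n → B,
    w'.1 = w.1 + P.mulVec (mapVec φ v) - v ∧ w'.2 = w.2 + Q.mulVec (mapVec γ v) - v

section Aux

variable {B : Type*} [CommRing B] {n : ℕ}

lemma mapVec_add (φ : B →+* B) (x y : Fin n → B) :
    mapVec φ (x + y) = mapVec φ x + mapVec φ y := by
  funext i; simp [mapVec]

lemma mapVec_neg (φ : B →+* B) (x : Fin n → B) : mapVec φ (-x) = -mapVec φ x := by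
  funext i; simp [mapVec]

lemma mapVec_zero (φ : B →+* B) : mapVec φ (0 : Fin n → B) = 0 := by
  funext i; simp [mapVec]

lemma mapVec_mulVec (φ : B →+* B) (M : Matrix (Fin n) (Fin n) B) (v : Fin n → B) :
    mapVec φ (M.mulVec v) = (M.map ⇑φ).mulVec (mapVec φ v) := by
  funext i
  simp [mapVec, Matrix.mulVec, dotProduct, map_sum]

lemma isUnit_map (φ : B →+* B) {M : Matrix (Fin n) (Fin n) B} (h : IsUnit M) :
    IsUnit (M.map ⇑φ) := h.map φ.mapMatrix

lemma map_inv_comm (φ : B →+* B) {M : Matrix (Fin n) (Fin n) B} (h : IsUnit M) :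
    (M.map ⇑φ)⁻¹ = M⁻¹.map ⇑φ := by
  apply Matrix.inv_eq_right_inv
  rw [← Matrix.map_mul, Matrix.mul_nonsing_inv _ (M.isUnit_iff_isUnit_det.mp h),
    Matrix.map_one _ (map_zero φ) (map_one φ)]

lemma mulVec_inv_cancel {M : Matrix (Fin n) (Fin n) B} (h : IsUnit M) (v : Fin n → B) :
    M.mulVec (M⁻¹.mulVec v) = v := by
  rw [Matrix.mulVec_mulVec, Matrix.mul_nonsing_inv _ (M.isUnit_iff_isUnit_det.mp h),
    Matrix.one_mulVec]

lemma inv_mulVec_cancel {M : Matrix (Fin n) (Fin n) B} (h : IsUnit M) (v : Fin n → B) :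
    M⁻¹.mulVec (M.mulVec v) = v := by
  rw [Matrix.mulVec_mulVec, Matrix.nonsing_inv_mul _ (M.isUnit_iff_isUnit_det.mp h),
    Matrix.one_mulVec]

/-- column matrix of a vector -/
def colV (x : Fin n → B) : Matrix (Fin n) (Fin 1) B :=
  Matrix.of fun i (_ : Fin 1) => x i

lemma colV_inj_iff {x y : Fin n → B} : colV x = colV y ↔ x = y := by
  constructor
  · intro h; funext i; exact congrFun (congrFun h i) 0
  · rintro rfl; rfl

lemma mul_colV (M : Matrix (Fin n) (Fin n) B) (x : Fin n → B) :
    M * colV x = colV (M.mulVec x) := by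
  ext i j
  simp [colV, Matrix.mul_apply, Matrix.mulVec, dotProduct]

lemma colV_add_eq (x y : Fin n → B) : colV x + colV y = colV (x + y) := by
  ext i j; simp [colV]

lemma colV_map (φ : B →+* B) (x : Fin n → B) : (colV x).map ⇑φ = colV (mapVec φ x) := by
  ext i j; simp [colV, mapVec]

lemma herrExt_iff (φ γ : B →+* B) (P Q : Matrix (Fin n) (Fin n) B)
    (hPQ : P * Q.map ⇑φ = Q * P.map ⇑γ) (x y : Fin n → B) :
    herrExt φ γ P Q (x, y) ↔
      x + P.mulVec (mapVec φ y) = y + Q.mulVec (mapVec γ x) := by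
  have hmapP : (blockExt P x).map ⇑γ = Matrix.fromBlocks (P.map ⇑γ) (colV (mapVec γ x)) 0 1 := by
    ext i j
    cases i <;> cases j <;>
      simp [blockExt, colV, mapVec, Matrix.one_apply, Fin.eq_zero]
  have hmapQ : (blockExt Q y).map ⇑φ = Matrix.fromBlocks (Q.map ⇑φ) (colV (mapVec φ y)) 0 1 := by
    ext i j
    cases i <;> cases j <;>
      simp [blockExt, colV, mapVec, Matrix.one_apply, Fin.eq_zero]
  have hbP : blockExt P x = Matrix.fromBlocks P (colV x) 0 1 := rfl
  have hbQ : blockExt Q y = Matrix.fromBlocks Q (colV y) 0 1 := rfl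
  show blockExt P x * (blockExt Q y).map ⇑φ = blockExt Q y * (blockExt P x).map ⇑γ ↔ _
  rw [hmapP, hmapQ, hbP, hbQ, Matrix.fromBlocks_multiply, Matrix.fromBlocks_multiply,
    Matrix.fromBlocks_inj]
  simp only [Matrix.mul_one, Matrix.mul_zero, Matrix.zero_mul, Matrix.one_mul, add_zero,
    zero_add, mul_colV, colV_add_eq, colV_inj_iff]
  constructor
  · rintro ⟨-, h, -, -⟩
    linear_combination h
  · intro h
    exact ⟨hPQ, by linear_combination h, trivial, trivial⟩

lemma herrD1_key (φ γ : B →+* B) (P Q : Matrix (Fin n) (Fin n) B)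
    (hP : IsUnit P) (hQ : IsUnit Q)
    (hPQ : P * Q.map ⇑φ = Q * P.map ⇑γ) (x y : Fin n → B) :
    (P * Q.map ⇑φ).mulVec (herrD1 φ γ P Q (P⁻¹.mulVec x, Q⁻¹.mulVec y)) =
      (Q.mulVec (mapVec γ x) + y) - (x + P.mulVec (mapVec φ y)) := by
  have hPγ : IsUnit (P.map ⇑γ) := isUnit_map γ hP
  have hQφ : IsUnit (Q.map ⇑φ) := isUnit_map φ hQ
  have hPγd := (P.map ⇑γ).isUnit_iff_isUnit_det.mp hPγ
  have hQφd := (Q.map ⇑φ).isUnit_iff_isUnit_det.mp hQφ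
  have hPd := P.isUnit_iff_isUnit_det.mp hP
  have hQd := Q.isUnit_iff_isUnit_det.mp hQ
  have h1 : (P * Q.map ⇑φ) * (P.map ⇑γ)⁻¹ = Q := by
    rw [hPQ, Matrix.mul_assoc, Matrix.mul_nonsing_inv _ hPγd, Matrix.mul_one]
  have h2 : (P * Q.map ⇑φ) * ((Q.map ⇑φ)⁻¹ * P⁻¹) = 1 := by
    rw [Matrix.mul_assoc, ← Matrix.mul_assoc (Q.map ⇑φ), Matrix.mul_nonsing_inv _ hQφd,
      Matrix.one_mul, Matrix.mul_nonsing_inv _ hPd]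
  have h3 : (P * Q.map ⇑φ) * ((P.map ⇑γ)⁻¹ * Q⁻¹) = 1 := by
    rw [hPQ, Matrix.mul_assoc, ← Matrix.mul_assoc (P.map ⇑γ), Matrix.mul_nonsing_inv _ hPγd,
      Matrix.one_mul, Matrix.mul_nonsing_inv _ hQd]
  have h4 : (P * Q.map ⇑φ) * (Q.map ⇑φ)⁻¹ = P := by
    rw [Matrix.mul_assoc, Matrix.mul_nonsing_inv _ hQφd, Matrix.mul_one]
  have e1 : mapVec γ (P⁻¹.mulVec x) = (P.map ⇑γ)⁻¹.mulVec (mapVec γ x) := by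
    rw [mapVec_mulVec, map_inv_comm γ hP]
  have e4 : mapVec φ (Q⁻¹.mulVec y) = (Q.map ⇑φ)⁻¹.mulVec (mapVec φ y) := by
    rw [mapVec_mulVec, map_inv_comm φ hQ]
  simp only [herrD1, e1, e4, Matrix.mulVec_add, Matrix.mulVec_sub, Matrix.mulVec_mulVec,
    h1, h2, h3, h4, Matrix.one_mulVec]
  abel

lemma herrD1_zero_iff (φ γ : B →+* B) (P Q : Matrix (Fin n) (Fin n) B)
    (hP : IsUnit P) (hQ : IsUnit Q)
    (hPQ : P * Q.map ⇑φ = Q * P.map ⇑γ) (x y : Fin n → B) :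
    herrD1 φ γ P Q (P⁻¹.mulVec x, Q⁻¹.mulVec y) = 0 ↔
      x + P.mulVec (mapVec φ y) = y + Q.mulVec (mapVec γ x) := by
  have hR : IsUnit (P * Q.map ⇑φ) := hP.mul (isUnit_map φ hQ)
  constructor
  · intro h
    have := herrD1_key φ γ P Q hP hQ hPQ x y
    rw [h, Matrix.mulVec_zero] at this
    have h2 : Q.mulVec (mapVec γ x) + y = x + P.mulVec (mapVec φ y) := by
      linear_combination -this
    linear_combination -h2
  · intro h
    have hk := herrD1_key φ γ P Q hP hQ hPQ x y
    have hz : (Q.mulVec (mapVec γ x) + y) - (x + P.mulVec (mapVec φ y)) = 0 := by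
      linear_combination -h
    rw [hz] at hk
    have := congrArg ((P * Q.map ⇑φ)⁻¹).mulVec hk
    rwa [inv_mulVec_cancel hR, Matrix.mulVec_zero] at this

end Aux

/-- the Proposition of Section 7.3 of the paper, in matrix form.
With `φ∘γ = γ∘φ` and `P·φ(Q) = Q·γ(P)` for `P, Q ∈ GL_n(B)`: the relation `∼` is an
equivalence relation; a pair `(x, y)` lies in `E` iff `(P⁻¹x, Q⁻¹y) ∈ ker d¹`; and
`(x, y) ↦ (P⁻¹x, Q⁻¹y)` induces a bijection from `E/∼` onto the first cohomology
`ker d¹ / im d⁰` of the framed Herr complex. -/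
theorem herr_first_cohomology_classifies_extensions
    {B : Type*} [CommRing B] {n : ℕ} (φ γ : B →+* B)
    (hcomm : φ.comp γ = γ.comp φ)
    (P Q : Matrix (Fin n) (Fin n) B) (hP : IsUnit P) (hQ : IsUnit Q)
    (hPQ : P * Q.map ⇑φ = Q * P.map ⇑γ) :
    -- `∼` is an equivalence relation
    Equivalence (herrRel φ γ P Q) ∧
    -- (i) membership in `E` is equivalent to being a cocycle
    (∀ x y : Fin n → B,
      herrExt φ γ P Q (x, y) ↔ herrD1 φ γ P Q (P⁻¹.mulVec x, Q⁻¹.mulVec y) = 0) ∧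
    -- (ii) well-definedness and injectivity on equivalence classes
    (∀ x y x' y' : Fin n → B, herrExt φ γ P Q (x, y) → herrExt φ γ P Q (x', y') →
      (herrRel φ γ P Q (x, y) (x', y') ↔
        ∃ v : Fin n → B,
          (P⁻¹.mulVec x', Q⁻¹.mulVec y') - (P⁻¹.mulVec x, Q⁻¹.mulVec y) =
            herrD0 φ γ P Q v)) ∧
    -- (ii) surjectivity onto the first cohomology
    (∀ w : (Fin n → B) × (Fin n → B), herrD1 φ γ P Q w = 0 →
      ∃ x y : Fin n → B, herrExt φ γ P Q (x, y) ∧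
        ∃ v : Fin n → B,
          (P⁻¹.mulVec x, Q⁻¹.mulVec y) - w = herrD0 φ γ P Q v) := by
  refine ⟨?_, ?_, ?_, ?_⟩
  · -- equivalence relation
    constructor
    · intro w
      exact ⟨0, by simp [mapVec_zero, Matrix.mulVec_zero], by
        simp [mapVec_zero, Matrix.mulVec_zero]⟩
    · rintro w w' ⟨v, h1, h2⟩
      refine ⟨-v, ?_, ?_⟩
      · rw [h1, mapVec_neg, Matrix.mulVec_neg]; ring
      · rw [h2, mapVec_neg, Matrix.mulVec_neg]; ring
    · rintro w w' w'' ⟨v, h1, h2⟩ ⟨u, h3, h4⟩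
      refine ⟨v + u, ?_, ?_⟩
      · rw [h3, h1, mapVec_add, Matrix.mulVec_add]; ring
      · rw [h4, h2, mapVec_add, Matrix.mulVec_add]; ring
  · -- (i)
    intro x y
    rw [herrExt_iff φ γ P Q hPQ, herrD1_zero_iff φ γ P Q hP hQ hPQ]
  · -- (ii) injectivity/well-definedness
    intro x y x' y' _ _
    constructor
    · rintro ⟨v, h1, h2⟩
      replace h1 : x' = x + P.mulVec (mapVec φ v) - v := h1
      replace h2 : y' = y + Q.mulVec (mapVec γ v) - v := h2
      refine ⟨v, ?_⟩
      simp only [herrD0, Prod.mk_sub_mk, Prod.mk.injEq]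
      constructor
      · rw [h1]
        simp only [Matrix.mulVec_add, Matrix.mulVec_sub, inv_mulVec_cancel hP]
        ring
      · rw [h2]
        simp only [Matrix.mulVec_add, Matrix.mulVec_sub, inv_mulVec_cancel hQ]
        ring
    · rintro ⟨v, h⟩
      simp only [herrD0, Prod.mk_sub_mk, Prod.mk.injEq] at h
      obtain ⟨h1, h2⟩ := h
      refine ⟨v, ?_, ?_⟩
      · have := congrArg P.mulVec h1
        simp only [Matrix.mulVec_sub, mulVec_inv_cancel hP] at this
        linear_combination this
      · have := congrArg Q.mulVec h2
        simp only [Matrix.mulVec_sub, mulVec_inv_cancel hQ] at this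
        linear_combination this
  · -- surjectivity
    intro w hw
    refine ⟨P.mulVec w.1, Q.mulVec w.2, ?_, 0, ?_⟩
    · rw [herrExt_iff φ γ P Q hPQ, ← herrD1_zero_iff φ γ P Q hP hQ hPQ,
        inv_mulVec_cancel hP, inv_mulVec_cancel hQ]
      simpa using hw
    · rw [inv_mulVec_cancel hP, inv_mulVec_cancel hQ]
      simp [herrD0, mapVec_zero, Matrix.mulVec_zero]
      rfl

end
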